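/- arXiv:2401.07440 — 2 statements merged into one kernel-verified Lean document; each statement's English description precedes it below -/
import Mathlib

section
/- Let S be a finite set, let score : S → ℕ be a function, and let q be a natural number with 1 ≤ q ≤ |S|. Suppose Q₁ and Q₂ are two q-element subsets of S, each of which maximizes the sum of score over all q-element subsets of S. Then the minimum value of score on Q₁ equals the minimum value of score on Q₂, and the number of elements of Q₁ attaining this minimum equals the number of elements of Q₂ attaining it. -/
/-- If `Q` maximizes the sum of `score` over `q`-element subsets, then every
element outside `Q` has score at most the minimum score inside `Q`. -/
lemma aux_outside_le_min {S : Type*} [Fintype S] [DecidableEq S] (score : S → ℕ)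
    {q : ℕ} {Q : Finset S} (hne : Q.Nonempty) (hcard : Q.card = q)
    (hmax : ∀ P : Finset S, P.card = q → ∑ d ∈ P, score d ≤ ∑ d ∈ Q, score d)
    {x : S} (hx : x ∉ Q) : score x ≤ Q.inf' hne score := by
  obtain ⟨d, hd, hdm⟩ := Q.exists_mem_eq_inf' hne score
  have hxe : x ∉ Q.erase d := fun h => hx (Finset.mem_of_mem_erase h)
  have hcard' : (insert x (Q.erase d)).card = q := by
    rw [Finset.card_insert_of_notMem hxe, Finset.card_erase_of_mem hd, hcard]
    have : 1 ≤ q := hcard ▸ Finset.card_pos.mpr hne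
    omega
  have h1 := hmax _ hcard'
  rw [Finset.sum_insert hxe] at h1
  have h2 : score d + ∑ y ∈ Q.erase d, score y = ∑ y ∈ Q, score y :=
    Finset.add_sum_erase _ _ hd
  rw [hdm]
  omega

/-- **The minimum score in a maximizing set, and its multiplicity, are
well-defined.**  Let `S` be a finite set, `score : S → ℕ`, and `1 ≤ q ≤ |S|`.
If `Q₁` and `Q₂` are two `q`-element subsets of `S`, each maximizing the sum
of `score` over all `q`-element subsets, then the minimum value of `score`
on `Q₁` equals the minimum value on `Q₂`, and the number of elements of `Q₁`
attaining this minimum equals the number of elements of `Q₂` attaining it. -/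
theorem maximizing_sets_same_min_and_multiplicity
    {S : Type*} [Fintype S] [DecidableEq S] (score : S → ℕ) (q : ℕ)
    (hq : 1 ≤ q) (hqcard : q ≤ Fintype.card S)
    (Q₁ Q₂ : Finset S) (hne₁ : Q₁.Nonempty) (hne₂ : Q₂.Nonempty)
    (hcard₁ : Q₁.card = q) (hcard₂ : Q₂.card = q)
    (hmax₁ : ∀ Q : Finset S, Q.card = q → ∑ d ∈ Q, score d ≤ ∑ d ∈ Q₁, score d)
    (hmax₂ : ∀ Q : Finset S, Q.card = q → ∑ d ∈ Q, score d ≤ ∑ d ∈ Q₂, score d) :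
    Q₁.inf' hne₁ score = Q₂.inf' hne₂ score ∧
      (Q₁.filter fun d => score d = Q₁.inf' hne₁ score).card =
        (Q₂.filter fun d => score d = Q₂.inf' hne₂ score).card := by
  -- general step: min of one maximizing set ≤ min of the other
  have key : ∀ (A B : Finset S) (hA : A.Nonempty) (hB : B.Nonempty),
      A.card = q → B.card = q →
      (∀ P : Finset S, P.card = q → ∑ d ∈ P, score d ≤ ∑ d ∈ A, score d) →
      B.inf' hB score ≤ A.inf' hA score := by
    intro A B hA hB hAc hBc hAmax
    by_contra hlt
    push_neg at hlt
    -- some element of A attains the (smaller) min of A, hence is not in B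
    obtain ⟨d, hdA, hdm⟩ := A.exists_mem_eq_inf' hA score
    have hdB : d ∉ B := by
      intro h
      have := (Finset.inf'_le score h : B.inf' hB score ≤ score d)
      omega
    have hnsub : ¬ B ⊆ A := by
      intro hsub
      have : B = A := Finset.eq_of_subset_of_card_le hsub (by omega)
      exact hdB (this ▸ hdA)
    obtain ⟨e, heB, heA⟩ := Finset.not_subset.mp hnsub
    have h1 : score e ≤ A.inf' hA score := aux_outside_le_min score hA hAc hAmax heA
    have h2 : B.inf' hB score ≤ score e := Finset.inf'_le score heB
    omega
  have hmineq : Q₁.inf' hne₁ score = Q₂.inf' hne₂ score :=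
    le_antisymm (key Q₂ Q₁ hne₂ hne₁ hcard₂ hcard₁ hmax₂)
      (key Q₁ Q₂ hne₁ hne₂ hcard₁ hcard₂ hmax₁)
  refine ⟨hmineq, ?_⟩
  set m := Q₁.inf' hne₁ score with hm
  -- elements with score > m are exactly the non-minimal elements of each set
  have hfilt : ∀ (A : Finset S) (hA : A.Nonempty),
      A.card = q → A.inf' hA score = m →
      (∀ P : Finset S, P.card = q → ∑ d ∈ P, score d ≤ ∑ d ∈ A, score d) →
      A.filter (fun d => ¬ score d = m) = Finset.univ.filter (fun x => m < score x) := by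
    intro A hA hAc hAm hAmax
    ext x
    simp only [Finset.mem_filter, Finset.mem_univ, true_and]
    constructor
    · rintro ⟨hxA, hxne⟩
      have : m ≤ score x := hAm ▸ Finset.inf'_le score hxA
      omega
    · intro hx
      by_cases hxA : x ∈ A
      · exact ⟨hxA, by omega⟩
      · have := aux_outside_le_min score hA hAc hAmax hxA
        omega
  have c₁ := Finset.card_filter_add_card_filter_not
    (s := Q₁) (p := fun d => score d = m)
  have c₂ := Finset.card_filter_add_card_filter_not
    (s := Q₂) (p := fun d => score d = m)
  rw [hfilt Q₁ hne₁ hcard₁ hm.symm hmax₁] at c₁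
  rw [hfilt Q₂ hne₂ hcard₂ hmineq.symm hmax₂] at c₂
  rw [← hmineq]
  omega
end

section
/- Let p, j, m be natural numbers with p ≥ 2, j ≥ 2p², and m ≥ 1. Then, as rational numbers, p + (2p−1)m < 2p(1 − p/(j+p))(m+1) − 1; equivalently, (p + (2p−1)m + 1)(j+p) < 2pj(m+1). -/
/-- If `p ≥ 2`, `j ≥ 2p²` and `m ≥ 1`, then, as rational numbers,
`p + (2p−1)m < 2p(1 − p/(j+p))(m+1) − 1`; equivalently (in ℕ),
`(p + (2p−1)m + 1)(j+p) < 2pj(m+1)`. -/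
theorem proportional_breakpoint_lt_cracking_bound
    (p j m : ℕ) (hp : 2 ≤ p) (hj : 2 * p ^ 2 ≤ j) (hm : 1 ≤ m) :
    (p : ℚ) + (2 * (p : ℚ) - 1) * (m : ℚ) <
        2 * (p : ℚ) * (1 - (p : ℚ) / ((j : ℚ) + (p : ℚ))) * ((m : ℚ) + 1) - 1 ∧
      (p + (2 * p - 1) * m + 1) * (j + p) < 2 * p * j * (m + 1) := by
  have hq : (p : ℚ) + (2 * (p : ℚ) - 1) * (m : ℚ) + 1 ≤ (p : ℚ) + (2 * (p : ℚ) - 1) * (m : ℚ) + 1 := le_refl _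
  have hpQ : (2 : ℚ) ≤ (p : ℚ) := by exact_mod_cast hp
  have hjQ : (2 : ℚ) * (p : ℚ) ^ 2 ≤ (j : ℚ) := by exact_mod_cast hj
  have hmQ : (1 : ℚ) ≤ (m : ℚ) := by exact_mod_cast hm
  have hjp : (0 : ℚ) < (j : ℚ) + (p : ℚ) := by nlinarith
  have key : ((p : ℚ) + (2 * (p : ℚ) - 1) * (m : ℚ) + 1) * ((j : ℚ) + (p : ℚ)) <
      2 * (p : ℚ) * (j : ℚ) * ((m : ℚ) + 1) := by nlinarith [sq_nonneg ((p:ℚ)-1), sq_nonneg ((p:ℚ)*((m:ℚ)-1))]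
  constructor
  · have h1 : 2 * (p : ℚ) * (1 - (p : ℚ) / ((j : ℚ) + (p : ℚ))) * ((m : ℚ) + 1)
        = 2 * (p : ℚ) * (j : ℚ) * ((m : ℚ) + 1) / ((j : ℚ) + (p : ℚ)) := by
      field_simp
      ring
    rw [h1, lt_sub_iff_add_lt, lt_div_iff₀ hjp]
    nlinarith [key]
  · have hsub : ((2 * p - 1 : ℕ) : ℚ) = 2 * (p : ℚ) - 1 := by
      have : 1 ≤ 2 * p := by omega
      push_cast [this]; ring
    have : (((p + (2 * p - 1) * m + 1) * (j + p) : ℕ) : ℚ) < ((2 * p * j * (m + 1) : ℕ) : ℚ) := by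
      push_cast [hsub]
      nlinarith [key]
    exact_mod_cast this
end
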